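/- Let F be a finite extension of Q_p, d ≥ 2 with p | d, and φ(X) = Σ_{i=0}^d a_i X^i ∈ O_F[X] with v_F(a_d) = 0 and v_F(a_i) > 0 whenever p ∤ i. Suppose λ, μ ∈ O_F and y ∈ O_F with 0 < |y − μ|_F < 1. Then |φ(y) − φ(μ)|_F < |y − μ|_F. -/
import Mathlib

open Finset in
lemma norm_sum_lt_of_forall_lt {F : Type*} [NormedField F] [IsUltrametricDist F]
    {ι : Type*} (s : Finset ι) (f : ι → F) {C : ℝ} (hC : 0 < C)
    (h : ∀ i ∈ s, ‖f i‖ < C) : ‖∑ i ∈ s, f i‖ < C := by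
  classical
  induction s using Finset.induction with
  | empty => simpa using hC
  | @insert a s hx ih =>
    rw [Finset.sum_insert hx]
    refine lt_of_le_of_lt (IsUltrametricDist.norm_add_le_max _ _) (max_lt ?_ ?_)
    · exact h a (Finset.mem_insert_self a s)
    · exact ih fun i hi => h i (Finset.mem_insert_of_mem hi)

lemma norm_natCast_le_one {p : ℕ} [Fact p.Prime] {F : Type*} [NormedField F]
    [Algebra ℚ_[p] F]
    (hext : ∀ x : ℚ_[p], ‖algebraMap ℚ_[p] F x‖ = ‖x‖) (n : ℕ) : ‖(n : F)‖ ≤ 1 := by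
  rw [show ((n : F) = algebraMap ℚ_[p] F n) by simp, hext,
    show ((n : ℚ_[p]) = ((n : ℤ) : ℚ_[p])) by simp]
  exact Padic.norm_int_le_one _

lemma norm_natCast_lt_one {p : ℕ} [Fact p.Prime] {F : Type*} [NormedField F]
    [Algebra ℚ_[p] F]
    (hext : ∀ x : ℚ_[p], ‖algebraMap ℚ_[p] F x‖ = ‖x‖) {n : ℕ} (h : p ∣ n) :
    ‖(n : F)‖ < 1 := by
  rw [show ((n : F) = algebraMap ℚ_[p] F n) by simp, hext,
    show ((n : ℚ_[p]) = ((n : ℤ) : ℚ_[p])) by simp,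
    Padic.norm_intCast_lt_one_iff]
  exact_mod_cast h

theorem contraction_step {p : ℕ} [Fact p.Prime] {F : Type*} [NormedField F]
    [Algebra ℚ_[p] F] [FiniteDimensional ℚ_[p] F] [IsUltrametricDist F]
    (hext : ∀ x : ℚ_[p], ‖algebraMap ℚ_[p] F x‖ = ‖x‖)
    (d : ℕ) (hd : 2 ≤ d) (hpd : p ∣ d)
    (φ : Polynomial F) (hdeg : φ.natDegree = d)
    (hint : ∀ i, ‖φ.coeff i‖ ≤ 1)
    (hlead : ‖φ.coeff d‖ = 1)
    (hsmall : ∀ i, ¬ p ∣ i → ‖φ.coeff i‖ < 1)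
    (lam μ y : F) (hlamO : ‖lam‖ ≤ 1) (hμO : ‖μ‖ ≤ 1) (hyO : ‖y‖ ≤ 1)
    (hpos : 0 < ‖y - μ‖) (hlt : ‖y - μ‖ < 1) :
    ‖φ.eval y - φ.eval μ‖ < ‖y - μ‖ := by
  classical
  set ψ := Polynomial.taylor μ φ with hψ
  set t := y - μ with ht
  -- helper: any coefficient of a Hasse derivative evaluated at μ has norm ≤ 1
  have hμpow : ∀ j : ℕ, ‖μ ^ j‖ ≤ 1 := fun j => by
    rw [norm_pow]; exact pow_le_one₀ (norm_nonneg μ) hμO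
  have hcoeff_le : ∀ k, ‖ψ.coeff k‖ ≤ 1 := by
    intro k
    rw [Polynomial.taylor_coeff]
    rw [Polynomial.eval_eq_sum_range]
    refine IsUltrametricDist.norm_sum_le_of_forall_le_of_nonneg zero_le_one ?_
    intro i _
    rw [norm_mul, Polynomial.hasseDeriv_coeff]
    calc ‖(↑((i + k).choose k) * φ.coeff (i + k))‖ * ‖μ ^ i‖
        ≤ ‖(↑((i + k).choose k) : F)‖ * ‖φ.coeff (i + k)‖ * 1 := by
          rw [norm_mul]
          exact mul_le_mul_of_nonneg_left (hμpow i) (by positivity)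
      _ ≤ 1 * 1 * 1 := by
          gcongr
          · exact norm_natCast_le_one hext _
          · exact hint _
      _ = 1 := by ring
  -- the linear coefficient is strictly small
  have hcoeff1 : ‖ψ.coeff 1‖ < 1 := by
    rw [Polynomial.taylor_coeff_one]
    rw [Polynomial.eval_eq_sum_range]
    refine norm_sum_lt_of_forall_lt _ _ one_pos ?_
    intro j _
    rw [Polynomial.coeff_derivative, norm_mul, norm_mul]
    have hμj := hμpow j
    have key : ‖φ.coeff (j + 1)‖ * ‖((j : F) + 1)‖ < 1 := by
      have hj1 : ((j : F) + 1) = ((j + 1 : ℕ) : F) := by push_cast; ring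
      by_cases hdvd : p ∣ (j + 1)
      · calc ‖φ.coeff (j + 1)‖ * ‖((j : F) + 1)‖
            ≤ 1 * ‖((j : F) + 1)‖ :=
              mul_le_mul_of_nonneg_right (hint _) (norm_nonneg _)
          _ = ‖((j + 1 : ℕ) : F)‖ := by rw [one_mul, hj1]
          _ < 1 := norm_natCast_lt_one hext hdvd
      · calc ‖φ.coeff (j + 1)‖ * ‖((j : F) + 1)‖
            ≤ ‖φ.coeff (j + 1)‖ * 1 := by
              refine mul_le_mul_of_nonneg_left ?_ (norm_nonneg _)
              rw [hj1]; exact norm_natCast_le_one hext _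
          _ = ‖φ.coeff (j + 1)‖ := mul_one _
          _ < 1 := hsmall _ hdvd
    calc ‖φ.coeff (j + 1)‖ * ‖((j : F) + 1)‖ * ‖μ ^ j‖
        ≤ ‖φ.coeff (j + 1)‖ * ‖((j : F) + 1)‖ * 1 := by
          refine mul_le_mul_of_nonneg_left hμj (by positivity)
      _ < 1 := by rw [mul_one]; exact key
  -- rewrite the difference as a sum over k ≥ 1
  have heval : φ.eval y = ψ.eval t := by
    rw [hψ, ht, Polynomial.taylor_eval_sub]
  have h0 : ψ.coeff 0 = φ.eval μ := Polynomial.taylor_coeff_zero μ φ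
  have hsum : φ.eval y - φ.eval μ =
      ∑ k ∈ (Finset.range (ψ.natDegree + 1)).erase 0, ψ.coeff k * t ^ k := by
    rw [heval, Polynomial.eval_eq_sum_range, ← h0]
    rw [← Finset.add_sum_erase (Finset.range (ψ.natDegree + 1))
      (fun k => ψ.coeff k * t ^ k) (Finset.mem_range.mpr (Nat.succ_pos _))]
    simp
  rw [hsum]
  refine norm_sum_lt_of_forall_lt _ _ hpos ?_
  intro k hk
  have hk0 : k ≠ 0 := (Finset.mem_erase.mp hk).1
  rw [norm_mul, norm_pow]
  rcases eq_or_ne k 1 with rfl | hk1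
  · rw [pow_one]
    exact mul_lt_of_lt_one_left hpos hcoeff1
  · have hk2 : 2 ≤ k := by omega
    calc ‖ψ.coeff k‖ * ‖t‖ ^ k ≤ 1 * ‖t‖ ^ k :=
          mul_le_mul_of_nonneg_right (hcoeff_le k) (by positivity)
      _ = ‖t‖ ^ k := one_mul _
      _ ≤ ‖t‖ ^ 2 := pow_le_pow_of_le_one (norm_nonneg t) hlt.le hk2
      _ < ‖t‖ := by nlinarith
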